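/- Let Λ be a finite set, let (ω_x)_{x∈Λ} be i.i.d. real random variables with λ(α) := log E[e^{αω}] finite, and let (δ_x)_{x∈Λ} be an arbitrary {0,1}^Λ-valued random vector, independent of ω, with law P_Λ. Then for every h > 0, E_ω[ log E_{P_Λ}[ exp(∑_{x∈Λ} (αω_x − λ(α) + h)δ_x) ] ] ≤ |Λ| · max_{p∈[0,1]} E[ log(1 + p(e^h ξ − 1)) ], where ξ := e^{αω − λ(α)}. -/

import Mathlib

open MeasureTheory

namespace QLPaux

/-! Scalar helper lemmas. -/

lemma pos01 {p E : ℝ} (h0 : 0 ≤ p) (h1 : p ≤ 1) (hE : 0 < E) : 0 < 1 + p * (E - 1) := by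
  rcases le_total E 1 with hE1 | hE1
  · nlinarith
  · nlinarith

lemma log_bern_le {p cy : ℝ} (h0 : 0 ≤ p) (h1 : p ≤ 1) :
    Real.log (1 + p * (Real.exp cy - 1)) ≤ Real.exp cy := by
  rcases le_total (Real.exp cy) 1 with hE | hE
  · have h2 : 1 + p * (Real.exp cy - 1) ≤ 1 := by nlinarith
    exact (Real.log_nonpos (pos01 h0 h1 (Real.exp_pos cy)).le h2).trans (Real.exp_pos cy).le
  · have h2 : 1 + p * (Real.exp cy - 1) ≤ Real.exp cy := by nlinarith
    calc Real.log (1 + p * (Real.exp cy - 1)) ≤ Real.log (Real.exp cy) :=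
          Real.log_le_log (pos01 h0 h1 (Real.exp_pos cy)) h2
      _ = cy := Real.log_exp cy
      _ ≤ Real.exp cy := by linarith [Real.add_one_le_exp cy]

lemma max_le_exp (c : ℝ) : max c 0 ≤ Real.exp c :=
  max_le (by linarith [Real.add_one_le_exp c]) (Real.exp_pos c).le

lemma integrable_sandwich {A : Type*} [MeasurableSpace A] {ν : Measure A} {f g₁ g₂ : A → ℝ}
    (hm : AEStronglyMeasurable f ν) (i1 : Integrable g₁ ν) (i2 : Integrable g₂ ν)
    (h1 : ∀ a, g₁ a ≤ f a) (h2 : ∀ a, f a ≤ g₂ a) : Integrable f ν := by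
  refine (i1.abs.add i2.abs).mono' hm (Filter.Eventually.of_forall fun a => ?_)
  rw [Real.norm_eq_abs, abs_le]
  constructor
  · have := h1 a
    have := neg_abs_le (g₁ a)
    have := abs_nonneg (g₂ a)
    simp only [Pi.add_apply, Pi.abs_apply] at *
    linarith
  · have := h2 a
    have := le_abs_self (g₂ a)
    have := abs_nonneg (g₁ a)
    simp only [Pi.add_apply, Pi.abs_apply] at *
    linarith

lemma pi_congr' {X : Type*} (F G : Fintype X) (μ : Measure ℝ) :
    @Measure.pi X (fun _ => ℝ) F (fun _ => inferInstance) (fun _ => μ)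
      = @Measure.pi X (fun _ => ℝ) G (fun _ => inferInstance) (fun _ => μ) := by
  cases Subsingleton.elim F G
  rfl

/-! The finite partition-function machinery over a finite configuration space. -/

variable {κ : Type*} [Fintype κ]

noncomputable def ind (b : Bool) : ℝ := if b then 1 else 0

lemma ind_nonneg (b : Bool) : 0 ≤ ind b := by cases b <;> simp [ind]

lemma ind_le_one (b : Bool) : ind b ≤ 1 := by cases b <;> simp [ind]

noncomputable def wt (c : κ → ℝ) (s : Finset κ) (δ : κ → Bool) : ℝ :=
  Real.exp (∑ x ∈ s, c x * ind (δ x))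

noncomputable def ZP (P : Measure (κ → Bool)) (c : κ → ℝ) (s : Finset κ) : ℝ :=
  ∫ δ, wt c s δ ∂P

noncomputable def GP (P : Measure (κ → Bool)) (c : κ → ℝ) (s : Finset κ) (y : κ) : ℝ :=
  ∫ δ, wt c s δ * ind (δ y) ∂P

lemma wt_pos (c : κ → ℝ) (s : Finset κ) (δ : κ → Bool) : 0 < wt c s δ := Real.exp_pos _

lemma wt_le (c : κ → ℝ) (s : Finset κ) (δ : κ → Bool) :
    wt c s δ ≤ Real.exp (∑ x ∈ s, max (c x) 0) := by
  refine Real.exp_le_exp.2 (Finset.sum_le_sum fun x _ => ?_)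
  cases hb : δ x <;> simp [ind, hb, le_max_iff]

lemma le_wt (c : κ → ℝ) (s : Finset κ) (δ : κ → Bool) :
    Real.exp (∑ x ∈ s, min (c x) 0) ≤ wt c s δ := by
  refine Real.exp_le_exp.2 (Finset.sum_le_sum fun x _ => ?_)
  cases hb : δ x <;> simp [ind, hb, min_le_iff]

variable (P : Measure (κ → Bool)) [IsProbabilityMeasure P]

lemma ZP_pos (c : κ → ℝ) (s : Finset κ) : 0 < ZP P c s := by
  have h1 : (∫ _δ : κ → Bool, Real.exp (∑ x ∈ s, min (c x) 0) ∂P) ≤ ZP P c s := by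
    refine integral_mono (integrable_const _) Integrable.of_finite fun δ => le_wt c s δ
  have h2 : (∫ _δ : κ → Bool, Real.exp (∑ x ∈ s, min (c x) 0) ∂P)
      = Real.exp (∑ x ∈ s, min (c x) 0) := by simp
  rw [h2] at h1
  exact lt_of_lt_of_le (Real.exp_pos _) h1

lemma ZP_le (c : κ → ℝ) (s : Finset κ) : ZP P c s ≤ Real.exp (∑ x ∈ s, max (c x) 0) := by
  have h1 : ZP P c s ≤ ∫ _δ : κ → Bool, Real.exp (∑ x ∈ s, max (c x) 0) ∂P :=
    integral_mono Integrable.of_finite (integrable_const _) fun δ => wt_le c s δ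
  simpa using h1

lemma log_ZP_le (c : κ → ℝ) (s : Finset κ) :
    Real.log (ZP P c s) ≤ ∑ x ∈ s, max (c x) 0 :=
  (Real.log_le_iff_le_exp (ZP_pos P c s)).2 (ZP_le P c s)

lemma GP_nonneg (c : κ → ℝ) (s : Finset κ) (y : κ) : 0 ≤ GP P c s y :=
  integral_nonneg fun δ => mul_nonneg (wt_pos c s δ).le (ind_nonneg _)

lemma GP_le_ZP (c : κ → ℝ) (s : Finset κ) (y : κ) : GP P c s y ≤ ZP P c s :=
  integral_mono Integrable.of_finite Integrable.of_finite fun δ =>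
    mul_le_of_le_one_right (wt_pos c s δ).le (ind_le_one _)

variable [DecidableEq κ]

lemma ZP_insert (c : κ → ℝ) (s : Finset κ) (y : κ) (hy : y ∉ s) :
    ZP P c (insert y s) = ZP P c s + (Real.exp (c y) - 1) * GP P c s y := by
  have hpt : ∀ δ : κ → Bool,
      wt c (insert y s) δ = wt c s δ + (Real.exp (c y) - 1) * (wt c s δ * ind (δ y)) := by
    intro δ
    rw [wt, Finset.sum_insert hy, Real.exp_add]
    cases hb : δ y
    · simp [wt, ind, hb]
    · simp only [wt, ind, hb, if_true, mul_one]
      ring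
  rw [ZP]
  simp_rw [hpt]
  rw [integral_add Integrable.of_finite Integrable.of_finite, integral_const_mul]
  rfl

lemma ZP_congr {c c' : κ → ℝ} (s : Finset κ) (hcc : ∀ x ∈ s, c x = c' x) :
    ZP P c s = ZP P c' s := by
  unfold ZP wt
  congr 1
  funext δ
  congr 1
  exact Finset.sum_congr rfl fun x hx => by rw [hcc x hx]

lemma GP_congr {c c' : κ → ℝ} (s : Finset κ) (y : κ) (hcc : ∀ x ∈ s, c x = c' x) :
    GP P c s y = GP P c' s y := by
  unfold GP wt
  congr 1
  funext δ
  congr 2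
  exact Finset.sum_congr rfl fun x hx => by rw [hcc x hx]

lemma p_mem (c : κ → ℝ) (s : Finset κ) (y : κ) :
    0 ≤ GP P c s y / ZP P c s ∧ GP P c s y / ZP P c s ≤ 1 :=
  ⟨div_nonneg (GP_nonneg P c s y) (ZP_pos P c s).le,
    (div_le_one (ZP_pos P c s)).2 (GP_le_ZP P c s y)⟩

lemma log_ZP_insert (c : κ → ℝ) (s : Finset κ) (y : κ) (hy : y ∉ s) :
    Real.log (ZP P c (insert y s)) =
      Real.log (ZP P c s) +
        Real.log (1 + (GP P c s y / ZP P c s) * (Real.exp (c y) - 1)) := by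
  have hZ := ZP_pos P c s
  have hp := p_mem P c s y
  have hpos2 : 0 < 1 + (GP P c s y / ZP P c s) * (Real.exp (c y) - 1) :=
    pos01 hp.1 hp.2 (Real.exp_pos _)
  have hkey : ZP P c (insert y s)
      = ZP P c s * (1 + (GP P c s y / ZP P c s) * (Real.exp (c y) - 1)) := by
    rw [ZP_insert P c s y hy]
    field_simp
  rw [hkey, Real.log_mul hZ.ne' hpos2.ne']

end QLPaux

open QLPaux

/-- Annealed-type upper bound: the quenched free energy of an arbitrary contact field
`δ` in an IID environment `ω` is bounded by `|Λ|` times the optimal Bernoulli value. -/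
theorem quenched_log_partition_le_bernoulli_sup
    {ι : Type*} (Λ : Finset ι)
    (μ : Measure ℝ) [IsProbabilityMeasure μ]
    (P : Measure (Λ → Bool)) [IsProbabilityMeasure P]
    (α h : ℝ) (hh : 0 < h)
    (hexp : Integrable (fun x => Real.exp (α * x)) μ)
    (lam : ℝ) (hlam : lam = Real.log (∫ x, Real.exp (α * x) ∂μ)) :
    (∫ ω, Real.log (∫ δ, Real.exp (∑ x : Λ,
          (α * ω x - lam + h) * (if δ x then 1 else 0)) ∂P)
        ∂(Measure.pi fun _ : Λ => μ)) ≤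
      (Λ.card : ℝ) *
        ⨆ p : Set.Icc (0:ℝ) 1,
          ∫ x, Real.log (1 + (p : ℝ) * (Real.exp h * Real.exp (α * x - lam) - 1)) ∂μ := by
  classical
  set π : Measure ({ x // x ∈ Λ } → ℝ) := Measure.pi fun _ : { x // x ∈ Λ } => μ with hπ
  set C : ({ x // x ∈ Λ } → ℝ) → { x // x ∈ Λ } → ℝ := fun ω x => α * ω x - lam + h with hC
  set S : ℝ := ⨆ p : Set.Icc (0:ℝ) 1,
      ∫ x, Real.log (1 + (p : ℝ) * (Real.exp h * Real.exp (α * x - lam) - 1)) ∂μ with hS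
  -- rewrite the goal in terms of `ZP`
  have hgoal : (∫ ω, Real.log (∫ δ, Real.exp (∑ x : Λ,
          (α * ω x - lam + h) * (if δ x then 1 else 0)) ∂P)
        ∂(Measure.pi fun _ : Λ => μ)) = ∫ ω, Real.log (ZP P (C ω) Finset.univ) ∂π := rfl
  rw [hgoal]
  have hcard : (Λ.card : ℝ) = ((Finset.univ : Finset { x // x ∈ Λ }).card : ℝ) := by
    simp [Finset.card_univ]
  rw [hcard]
  -- basic integral computations
  have hμpos : 0 < ∫ x, Real.exp (α * x) ∂μ := integral_exp_pos hexp
  have hInt0 : Integrable (fun x : ℝ => Real.exp (α * x - lam)) μ := by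
    refine (hexp.const_mul (Real.exp (-lam))).congr (Filter.Eventually.of_forall fun x => ?_)
    show Real.exp (-lam) * Real.exp (α * x) = Real.exp (α * x - lam)
    rw [← Real.exp_add]
    ring_nf
  have hInt1 : (∫ x, Real.exp (α * x - lam) ∂μ) = 1 := by
    have he : (fun x : ℝ => Real.exp (α * x - lam))
        = fun x => Real.exp (-lam) * Real.exp (α * x) := by
      funext x
      rw [← Real.exp_add]
      ring_nf
    rw [he, integral_const_mul, hlam, Real.exp_neg, Real.exp_log hμpos,
      inv_mul_cancel₀ hμpos.ne']
  -- the sup family is bounded above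
  have hSbdd : BddAbove (Set.range fun p : Set.Icc (0:ℝ) 1 =>
      ∫ x, Real.log (1 + (p : ℝ) * (Real.exp h * Real.exp (α * x - lam) - 1)) ∂μ) := by
    refine ⟨Real.exp h - 1, ?_⟩
    rintro _ ⟨p, rfl⟩
    show (∫ x, Real.log (1 + (p : ℝ) * (Real.exp h * Real.exp (α * x - lam) - 1)) ∂μ)
      ≤ Real.exp h - 1
    obtain ⟨h0, h1⟩ := p.2
    have heh : (1:ℝ) ≤ Real.exp h := Real.one_le_exp hh.le
    by_cases hi : Integrable
        (fun x => Real.log (1 + (p : ℝ) * (Real.exp h * Real.exp (α * x - lam) - 1))) μ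
    · have hintg : Integrable
          (fun x => (p : ℝ) * (Real.exp h * Real.exp (α * x - lam) - 1)) μ :=
        (((hInt0.const_mul (Real.exp h)).sub (integrable_const 1)).const_mul _)
      calc (∫ x, Real.log (1 + (p : ℝ) * (Real.exp h * Real.exp (α * x - lam) - 1)) ∂μ)
          ≤ ∫ x, (p : ℝ) * (Real.exp h * Real.exp (α * x - lam) - 1) ∂μ := by
            refine integral_mono hi hintg fun x => ?_
            have hpos := pos01 h0 h1
              (mul_pos (Real.exp_pos h) (Real.exp_pos (α * x - lam)))
            have := Real.log_le_sub_one_of_pos hpos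
            linarith
        _ = (p : ℝ) * (Real.exp h * ∫ x, Real.exp (α * x - lam) ∂μ - 1) := by
            rw [integral_const_mul, integral_sub (hInt0.const_mul _) (integrable_const 1),
              integral_const_mul]
            simp
        _ = (p : ℝ) * (Real.exp h - 1) := by rw [hInt1]; ring
        _ ≤ Real.exp h - 1 := by nlinarith
    · rw [integral_undef hi]
      linarith
  have hS0 : 0 ≤ S := by
    have hle := le_ciSup hSbdd (⟨0, by norm_num⟩ : Set.Icc (0:ℝ) 1)
    simpa using hle
  have hSle : ∀ q : ℝ, 0 ≤ q → q ≤ 1 →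
      (∫ x, Real.log (1 + q * (Real.exp (α * x - lam + h) - 1)) ∂μ) ≤ S := by
    intro q h0 h1
    have hre : (fun x => Real.log (1 + q * (Real.exp (α * x - lam + h) - 1)))
        = fun x => Real.log (1 + q * (Real.exp h * Real.exp (α * x - lam) - 1)) := by
      funext x
      rw [show α * x - lam + h = h + (α * x - lam) by ring, Real.exp_add]
    rw [hre]
    exact le_ciSup hSbdd (⟨q, ⟨h0, h1⟩⟩ : Set.Icc (0:ℝ) 1)
  -- measurability of the partition functions in the disorder
  have measC : ∀ x : { x // x ∈ Λ }, Measurable fun ω : { x // x ∈ Λ } → ℝ => C ω x := by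
    intro x
    show Measurable fun ω : { x // x ∈ Λ } → ℝ => α * ω x - lam + h
    have hpx : Measurable fun ω : { x // x ∈ Λ } → ℝ => ω x := measurable_pi_apply x
    exact ((hpx.const_mul α).sub_const lam).add_const h
  have measZ : ∀ s : Finset { x // x ∈ Λ }, Measurable fun ω : { x // x ∈ Λ } → ℝ => ZP P (C ω) s := by
    intro s
    have hz : (fun ω : { x // x ∈ Λ } → ℝ => ZP P (C ω) s)
        = fun ω => ∑ δ : { x // x ∈ Λ } → Bool, (P {δ}).toReal • wt (C ω) s δ := by
      funext ω
      exact integral_fintype Integrable.of_finite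
    rw [hz]
    refine Finset.measurable_sum _ fun δ _ => ?_
    simp only [smul_eq_mul, wt]
    exact measurable_const.mul
      ((Finset.measurable_sum s fun x _ => (measC x).mul_const _).exp)
  have measG : ∀ (s : Finset { x // x ∈ Λ }) (y : { x // x ∈ Λ }), Measurable fun ω : { x // x ∈ Λ } → ℝ => GP P (C ω) s y := by
    intro s y
    have hz : (fun ω : { x // x ∈ Λ } → ℝ => GP P (C ω) s y)
        = fun ω => ∑ δ : { x // x ∈ Λ } → Bool, (P {δ}).toReal • (wt (C ω) s δ * ind (δ y)) := by
      funext ω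
      exact integral_fintype Integrable.of_finite
    rw [hz]
    refine Finset.measurable_sum _ fun δ _ => ?_
    simp only [smul_eq_mul, wt]
    exact measurable_const.mul
      (((Finset.measurable_sum s fun x _ => (measC x).mul_const _).exp).mul_const _)
  -- integrability of the basic exponential weights
  have hexp' : ∀ y : { x // x ∈ Λ }, Integrable (fun ω : { x // x ∈ Λ } → ℝ => Real.exp (C ω y)) π := by
    intro y
    letI : Unique { i : { x // x ∈ Λ } // i = y } := ⟨⟨⟨y, rfl⟩⟩, by rintro ⟨x, rfl⟩; rfl⟩
    have h1 := measurePreserving_piEquivPiSubtypeProd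
      (fun _ : { x // x ∈ Λ } => μ) (fun i => i = y)
    have h1' : MeasurePreserving
        (⇑(MeasurableEquiv.piEquivPiSubtypeProd (fun _ : { x // x ∈ Λ } => ℝ) (fun i => i = y))) π
        ((Measure.pi fun _ : { i : { x // x ∈ Λ } // i = y } => μ).prod
          (Measure.pi fun _ : { i : { x // x ∈ Λ } // ¬ i = y } => μ)) := by
      convert h1 using 3 <;> exact pi_congr' _ _ μ
    have h2 : MeasurePreserving
        (Prod.fst : (({ i : { x // x ∈ Λ } // i = y } → ℝ) ×
            ({ i : { x // x ∈ Λ } // ¬ i = y } → ℝ)) → ({ i : { x // x ∈ Λ } // i = y } → ℝ))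
        ((Measure.pi fun _ : { i : { x // x ∈ Λ } // i = y } => μ).prod
          (Measure.pi fun _ : { i : { x // x ∈ Λ } // ¬ i = y } => μ))
        (Measure.pi fun _ : { i : { x // x ∈ Λ } // i = y } => μ) := by
      constructor
      · exact measurable_fst
      · rw [Measure.map_fst_prod]
        simp
    have h3 := measurePreserving_funUnique μ { i : { x // x ∈ Λ } // i = y }
    have h3' : MeasurePreserving
        (⇑(MeasurableEquiv.funUnique { i : { x // x ∈ Λ } // i = y } ℝ))
        (Measure.pi fun _ : { i : { x // x ∈ Λ } // i = y } => μ) μ := by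
      convert h3 using 2 <;> exact pi_congr' _ _ μ
    have mp : MeasurePreserving (fun ω : { x // x ∈ Λ } → ℝ => ω y) π μ := by
      have h4 := h3'.comp (h2.comp h1')
      have h5 : (⇑(MeasurableEquiv.funUnique { i : { x // x ∈ Λ } // i = y } ℝ) ∘
          (Prod.fst ∘ ⇑(MeasurableEquiv.piEquivPiSubtypeProd (fun _ : { x // x ∈ Λ } => ℝ)
            (fun i => i = y))))
          = fun ω : { x // x ∈ Λ } → ℝ => ω y := by
        funext ω
        rfl
      rwa [h5] at h4
    have h6 : Integrable ((fun x : ℝ => Real.exp (α * x)) ∘ fun ω : { x // x ∈ Λ } → ℝ => ω y) π :=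
      (mp.integrable_comp hexp.1).2 hexp
    have h7 : Integrable (fun ω : { x // x ∈ Λ } → ℝ => Real.exp (α * ω y)) π := h6
    have h8 : (fun ω : { x // x ∈ Λ } → ℝ => Real.exp (C ω y))
        = fun ω => Real.exp (h - lam) * Real.exp (α * ω y) := by
      funext ω
      rw [← Real.exp_add, hC]
      ring_nf
    rw [h8]
    exact h7.const_mul _
  -- the main induction over finite sets of sites
  have main : ∀ s : Finset { x // x ∈ Λ }, Integrable (fun ω => Real.log (ZP P (C ω) s)) π →
      (∫ ω, Real.log (ZP P (C ω) s) ∂π) ≤ s.card * S := by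
    intro s
    induction s using Finset.induction_on with
    | empty =>
        intro _
        have : ∀ ω : { x // x ∈ Λ } → ℝ, ZP P (C ω) (∅ : Finset { x // x ∈ Λ }) = 1 := by
          intro ω
          simp [ZP, wt]
        simp [this]
    | @insert y t hy ih =>
        intro hint
        set φ : ({ x // x ∈ Λ } → ℝ) → ℝ := fun ω =>
          Real.log (1 + (GP P (C ω) t y / ZP P (C ω) t) * (Real.exp (C ω y) - 1)) with hφ
        have hdec : ∀ ω, Real.log (ZP P (C ω) (insert y t))
            = Real.log (ZP P (C ω) t) + φ ω := fun ω => log_ZP_insert P (C ω) t y hy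
        have hφle : ∀ ω, φ ω ≤ Real.exp (C ω y) := fun ω =>
          log_bern_le (p_mem P (C ω) t y).1 (p_mem P (C ω) t y).2
        have hUt : Integrable (fun ω => ∑ x ∈ t, Real.exp (C ω x)) π :=
          integrable_finset_sum _ fun x _ => hexp' x
        have hlogZt_le : ∀ ω, Real.log (ZP P (C ω) t) ≤ ∑ x ∈ t, Real.exp (C ω x) :=
          fun ω => (log_ZP_le P (C ω) t).trans (Finset.sum_le_sum fun x _ => max_le_exp _)
        have hmeasZt : AEStronglyMeasurable (fun ω => Real.log (ZP P (C ω) t)) π :=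
          ((measZ t).log).aestronglyMeasurable
        have hmeasφ : AEStronglyMeasurable φ π := by
          refine Measurable.aestronglyMeasurable ?_
          refine Measurable.log ?_
          exact measurable_const.add
            (((measG t y).div (measZ t)).mul (((measC y).exp).sub_const 1))
        have hiZt : Integrable (fun ω => Real.log (ZP P (C ω) t)) π := by
          refine integrable_sandwich hmeasZt (hint.sub (hexp' y)) hUt
            (fun ω => ?_) hlogZt_le
          have := hdec ω
          have := hφle ω
          simp only [Pi.sub_apply]
          linarith
        have hiφ : Integrable φ π := by
          refine integrable_sandwich hmeasφ (hint.sub hUt) (hexp' y)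
            (fun ω => ?_) hφle
          have := hdec ω
          have := hlogZt_le ω
          simp only [Pi.sub_apply]
          linarith
        have hsplit : (∫ ω, Real.log (ZP P (C ω) (insert y t)) ∂π)
            = (∫ ω, Real.log (ZP P (C ω) t) ∂π) + ∫ ω, φ ω ∂π := by
          rw [← integral_add hiZt hiφ]
          exact integral_congr_ae (Filter.Eventually.of_forall hdec)
        -- the Fubini step
        have hφS : (∫ ω, φ ω ∂π) ≤ S := by
          letI : Unique { i : { x // x ∈ Λ } // i = y } := ⟨⟨⟨y, rfl⟩⟩, by rintro ⟨x, rfl⟩; rfl⟩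
          set e := MeasurableEquiv.piEquivPiSubtypeProd (fun _ : { x // x ∈ Λ } => ℝ)
            (fun i => i = y) with he
          have h1 := measurePreserving_piEquivPiSubtypeProd
            (fun _ : { x // x ∈ Λ } => μ) (fun i => i = y)
          have h1' : MeasurePreserving (⇑e) π
              ((Measure.pi fun _ : { i : { x // x ∈ Λ } // i = y } => μ).prod
                (Measure.pi fun _ : { i : { x // x ∈ Λ } // ¬ i = y } => μ)) := by
            convert h1 using 3 <;> exact pi_congr' _ _ μ
          have hid : (∫ ω, φ ω ∂π) = ∫ z, φ (e.symm z)
              ∂((Measure.pi fun _ : { i : { x // x ∈ Λ } // i = y } => μ).prod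
                (Measure.pi fun _ : { i : { x // x ∈ Λ } // ¬ i = y } => μ)) :=
            (MeasurePreserving.integral_comp (MeasurePreserving.symm _ h1')
              e.symm.measurableEmbedding φ).symm
          have hiφ' : Integrable (fun z => φ (e.symm z))
              ((Measure.pi fun _ : { i : { x // x ∈ Λ } // i = y } => μ).prod
                (Measure.pi fun _ : { i : { x // x ∈ Λ } // ¬ i = y } => μ)) := by
            have h9 := (MeasurePreserving.integrable_comp_emb (MeasurePreserving.symm _ h1')
              e.symm.measurableEmbedding (g := φ)).2 hiφ
            exact h9
          rw [hid, integral_prod_symm _ hiφ']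
          have hinner_le : ∀ v, (∫ u, φ (e.symm (u, v))
              ∂(Measure.pi fun _ : { i : { x // x ∈ Λ } // i = y } => μ)) ≤ S := by
            intro v
            set ω₀ : { x // x ∈ Λ } → ℝ := e.symm (fun _ => 0, v) with hω₀
            set q : ℝ := GP P (C ω₀) t y / ZP P (C ω₀) t with hq
            have hq01 := p_mem P (C ω₀) t y
            have hcoord : ∀ (u : { i : { x // x ∈ Λ } // i = y } → ℝ)
                (x : { x // x ∈ Λ }) (hx : ¬ x = y),
                e.symm (u, v) x = v ⟨x, hx⟩ := by
              intro u x hx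
              simp [he, MeasurableEquiv.piEquivPiSubtypeProd,
                Equiv.piEquivPiSubtypeProd, dif_neg hx]
            have hcoordy : ∀ u : { i : { x // x ∈ Λ } // i = y } → ℝ,
                e.symm (u, v) y = u default := by
              intro u
              have h10 : e.symm (u, v) y = u ⟨y, rfl⟩ := by
                simp [he, MeasurableEquiv.piEquivPiSubtypeProd,
                  Equiv.piEquivPiSubtypeProd]
              rw [h10]
              exact congrArg u (Subsingleton.elim _ _)
            have hrw : ∀ u : { i : { x // x ∈ Λ } // i = y } → ℝ,
                φ (e.symm (u, v)) =
                  Real.log (1 + q * (Real.exp (α * u default - lam + h) - 1)) := by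
              intro u
              have h2 : ∀ x ∈ t, C (e.symm (u, v)) x = C ω₀ x := by
                intro x hx
                have hxy : ¬ x = y := fun hxy => hy (hxy ▸ hx)
                simp only [hC]
                rw [hcoord u x hxy, hω₀, hcoord (fun _ => 0) x hxy]
              have h1y : C (e.symm (u, v)) y = α * u default - lam + h := by
                simp only [hC]
                rw [hcoordy u]
              rw [hφ]
              simp only
              rw [GP_congr P t y h2, ZP_congr P t h2, h1y, hq]
            have h3 := measurePreserving_funUnique μ { i : { x // x ∈ Λ } // i = y }
            have h3' : MeasurePreserving
                (⇑(MeasurableEquiv.funUnique { i : { x // x ∈ Λ } // i = y } ℝ))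
                (Measure.pi fun _ : { i : { x // x ∈ Λ } // i = y } => μ) μ := by
              convert h3 using 2 <;> exact pi_congr' _ _ μ
            calc (∫ u, φ (e.symm (u, v))
                  ∂(Measure.pi fun _ : { i : { x // x ∈ Λ } // i = y } => μ))
                = ∫ u : { i : { x // x ∈ Λ } // i = y } → ℝ,
                    Real.log (1 + q * (Real.exp (α * u default - lam + h) - 1))
                    ∂(Measure.pi fun _ : { i : { x // x ∈ Λ } // i = y } => μ) :=
                  integral_congr_ae (Filter.Eventually.of_forall hrw)
              _ = ∫ x : ℝ, Real.log (1 + q * (Real.exp (α * x - lam + h) - 1)) ∂μ := by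
                  have h5 := h3'.integral_comp
                    (MeasurableEquiv.funUnique { i : { x // x ∈ Λ } // i = y } ℝ).measurableEmbedding
                    (fun x : ℝ => Real.log (1 + q * (Real.exp (α * x - lam + h) - 1)))
                  exact h5
              _ ≤ S := hSle q hq01.1 hq01.2
          have hinner_int : Integrable (fun v => ∫ u, φ (e.symm (u, v))
              ∂(Measure.pi fun _ : { i : { x // x ∈ Λ } // i = y } => μ))
              (Measure.pi fun _ : { i : { x // x ∈ Λ } // ¬ i = y } => μ) :=
            hiφ'.integral_prod_right
          calc (∫ v, ∫ u, φ (e.symm (u, v))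
                ∂(Measure.pi fun _ : { i : { x // x ∈ Λ } // i = y } => μ)
                ∂(Measure.pi fun _ : { i : { x // x ∈ Λ } // ¬ i = y } => μ))
              ≤ ∫ _v, S ∂(Measure.pi fun _ : { i : { x // x ∈ Λ } // ¬ i = y } => μ) :=
                integral_mono hinner_int (integrable_const S) hinner_le
            _ = S := by simp
        rw [hsplit, Finset.card_insert_of_notMem hy]
        push_cast
        have hih := ih hiZt
        linarith
  by_cases hint : Integrable (fun ω => Real.log (ZP P (C ω) Finset.univ)) π
  · exact main Finset.univ hint
  · rw [integral_undef hint]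
    positivity
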